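/- Let $N \ge 3$, $R > 0$, $0 \le s \le 2$, $x_R = (0,\dots,0,-R)$, and $\lambda > R$. Then for every $y \in B_\lambda(x_R) \cap \mathbb{R}^N_+$ (i.e. $|y - x_R| < \lambda$ and $y_N > 0$), one has $\left(\frac{\lambda}{|y - x_R|}\right)^{2s} \frac{1}{\left|x_R + \frac{\lambda^2 (y - x_R)}{|y - x_R|^2}\right|^{s}} \le \frac{1}{|y|^{s}}.$ -/

import Mathlib

open RealInnerProductSpace

theorem inversion_hardy_weight_inequality (N : ℕ) (hN : 3 ≤ N) (R : ℝ) (hR : 0 < R)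
    (s : ℝ) (hs0 : 0 ≤ s) (hs2 : s ≤ 2)
    (xR : EuclideanSpace ℝ (Fin N))
    (hxR : ∀ i : Fin N, xR i = if (i : ℕ) = N - 1 then -R else 0)
    (lam : ℝ) (hlam : R < lam) :
    ∀ y : EuclideanSpace ℝ (Fin N), ‖y - xR‖ < lam → 0 < y ⟨N - 1, by omega⟩ →
      (lam / ‖y - xR‖) ^ (2 * s) *
          (1 / ‖xR + (lam ^ 2 / ‖y - xR‖ ^ 2) • (y - xR)‖ ^ s)
        ≤ 1 / ‖y‖ ^ s := by
  intro y hy hyN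
  set n : Fin N := ⟨N - 1, by omega⟩ with hn
  -- inner products
  have hxRn : xR n = -R := by rw [hxR]; simp [n]
  have hiy : ⟪xR, y⟫ = -R * y n := by
    rw [PiLp.inner_apply]
    rw [Finset.sum_eq_single n]
    · simp [hxRn]; ring
    · intro b _ hb
      rw [hxR]
      have : (b : ℕ) ≠ N - 1 := fun h => hb (Fin.ext h)
      simp [this]
    · simp
  have hixx : ⟪xR, xR⟫ = R ^ 2 := by
    rw [PiLp.inner_apply]
    rw [Finset.sum_eq_single n]
    · simp [hxRn]
    · intro b _ hb
      rw [hxR]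
      have : (b : ℕ) ≠ N - 1 := fun h => hb (Fin.ext h)
      simp [this]
    · simp
  have hnxR : ‖xR‖ ^ 2 = R ^ 2 := by
    rw [← real_inner_self_eq_norm_sq, hixx]
  set r : ℝ := ‖y - xR‖ with hrdef
  have hr2 : r ^ 2 = ‖y‖ ^ 2 + 2 * R * y n + R ^ 2 := by
    rw [hrdef, norm_sub_sq_real, real_inner_comm, hiy, hnxR]; ring
  have hy0 : 0 < ‖y‖ := by
    rw [norm_pos_iff]
    intro h
    rw [h] at hyN
    simp at hyN
  have hr0 : 0 < r := by
    rw [hrdef, norm_pos_iff, sub_ne_zero]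
    intro h
    have : y n = xR n := by rw [h]
    rw [hxRn] at this
    linarith
  have hlam0 : 0 < lam := lt_trans hR hlam
  set c : ℝ := lam ^ 2 / r ^ 2 with hc
  have hc0 : 0 < c := div_pos (by positivity) (by positivity)
  set z : EuclideanSpace ℝ (Fin N) := xR + c • (y - xR) with hz
  have hz2 : ‖z‖ ^ 2 = R ^ 2 + 2 * c * (-R * y n - R ^ 2) + c ^ 2 * r ^ 2 := by
    rw [hz, norm_add_sq_real, real_inner_smul_right, inner_sub_right, hiy, hixx,
      hnxR, norm_smul, mul_pow, ← hrdef]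
    simp [abs_of_pos hc0]
    ring
  have hrl : r ^ 2 ≤ lam ^ 2 := by nlinarith
  -- key inequality
  have hkey2 : (lam ^ 2 * ‖y‖) ^ 2 ≤ (r ^ 2 * ‖z‖) ^ 2 := by
    have hc2 : c * r ^ 2 = lam ^ 2 := by
      rw [hc]; field_simp
    have expand : (r ^ 2 * ‖z‖) ^ 2 - (lam ^ 2 * ‖y‖) ^ 2
        = R ^ 2 * (r ^ 2 - lam ^ 2) ^ 2 + 2 * R * y n * lam ^ 2 * (lam ^ 2 - r ^ 2) := by
      have : (r ^ 2 * ‖z‖) ^ 2 = (r^2)^2 * ‖z‖^2 := by ring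
      rw [this, hz2]
      have hy2 : ‖y‖ ^ 2 = r ^ 2 - 2 * R * y n - R ^ 2 := by linarith
      have : (lam ^ 2 * ‖y‖) ^ 2 = (lam^2)^2 * ‖y‖^2 := by ring
      rw [this, hy2, hc]
      field_simp
      ring
    have hA : 0 ≤ R ^ 2 * (r ^ 2 - lam ^ 2) ^ 2 := by positivity
    have hB : 0 ≤ 2 * R * y n * lam ^ 2 * (lam ^ 2 - r ^ 2) := by
      have := sub_nonneg.mpr hrl
      positivity
    linarith
  have hz0 : 0 < ‖z‖ := by
    by_contra h
    push_neg at h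
    have : ‖z‖ = 0 := le_antisymm h (norm_nonneg z)
    rw [this] at hkey2
    nlinarith [mul_pos (pow_pos hlam0 2) hy0]
  have hkey : lam ^ 2 * ‖y‖ ≤ r ^ 2 * ‖z‖ := by
    have h1 : 0 ≤ lam ^ 2 * ‖y‖ := by positivity
    have h2 : 0 ≤ r ^ 2 * ‖z‖ := by positivity
    nlinarith
  -- base inequality
  have hbase : (lam / r) ^ 2 * (1 / ‖z‖) ≤ 1 / ‖y‖ := by
    rw [div_pow, div_mul_div_comm, mul_one, div_le_div_iff₀ (by positivity) hy0]
    calc lam ^ 2 * ‖y‖ ≤ r ^ 2 * ‖z‖ := hkey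
    _ = 1 * (r ^ 2 * ‖z‖) := (one_mul _).symm
  -- convert rpow
  have hlr : 0 ≤ lam / r := by positivity
  have e1 : (lam / r) ^ (2 * s) = ((lam / r) ^ 2) ^ s := by
    rw [Real.rpow_mul hlr]
    norm_num
  have e2 : (1 / ‖z‖ ^ s) = (1 / ‖z‖) ^ s := by
    rw [Real.div_rpow zero_le_one (norm_nonneg z), Real.one_rpow]
  have e3 : (1 : ℝ) / ‖y‖ ^ s = (1 / ‖y‖) ^ s := by
    rw [Real.div_rpow zero_le_one (norm_nonneg y), Real.one_rpow]
  rw [e1, e2, e3, ← Real.mul_rpow (by positivity) (by positivity)]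
  exact Real.rpow_le_rpow (by positivity) hbase hs0
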